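/- Let a > 0, let f : ℂ → ℂ be complex-differentiable on the open ball B(0,a), and assume that z ↦ ‖f(z)‖² is integrable on B(0,a). Then for every z with ‖z‖ < a, one has ‖ ∫_{t ∈ [0,1]} f(t·z) · z dt ‖ ≤ π^{-1/2} · ‖f‖_{L²(B_a)} · log( a / (a − ‖z‖) ). -/

import Mathlib

open Complex Metric MeasureTheory
open Set
open scoped Real ENNReal

section Aux

open Real

theorem lintegral_comp_polarCoord_symm' (g : ℝ × ℝ → ℝ≥0∞) :
    ∫⁻ p in polarCoord.target, ENNReal.ofReal p.1 * g (polarCoord.symm p) = ∫⁻ p, g p := by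
  set B : ℝ × ℝ → ℝ × ℝ →L[ℝ] ℝ × ℝ := fun p =>
    LinearMap.toContinuousLinearMap (Matrix.toLin (Module.Basis.finTwoProd ℝ) (Module.Basis.finTwoProd ℝ)
      !![Real.cos p.2, -p.1 * Real.sin p.2; Real.sin p.2, p.1 * Real.cos p.2])
  have A : ∀ p ∈ polarCoord.target, HasFDerivWithinAt polarCoord.symm (B p) polarCoord.target p :=
    fun p _ => (hasFDerivAt_polarCoord_symm p).hasFDerivWithinAt
  have B_det : ∀ p, (B p).det = p.1 := by
    intro p
    conv_rhs => rw [← one_mul p.1, ← Real.cos_sq_add_sin_sq p.2]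
    simp only [B, neg_mul, LinearMap.det_toContinuousLinearMap, LinearMap.det_toLin,
      Matrix.det_fin_two_of, sub_neg_eq_add]
    ring
  symm
  calc
    ∫⁻ p, g p = ∫⁻ p in polarCoord.source, g p := by
      rw [← setLIntegral_univ]
      exact (setLIntegral_congr polarCoord_source_ae_eq_univ).symm
    _ = ∫⁻ p in polarCoord.symm '' polarCoord.target, g p := by
      rw [polarCoord.symm_image_target_eq_source]
    _ = ∫⁻ p in polarCoord.target, ENNReal.ofReal |(B p).det| * g (polarCoord.symm p) := by
      apply lintegral_image_eq_lintegral_abs_det_fderiv_mul volume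
        polarCoord.open_target.measurableSet A
      rw [← polarCoord.symm_source]
      exact polarCoord.symm.injOn
    _ = ∫⁻ p in polarCoord.target, ENNReal.ofReal p.1 * g (polarCoord.symm p) := by
      refine setLIntegral_congr_fun polarCoord.open_target.measurableSet
        (fun x hx => ?_)
      rw [B_det, abs_of_pos hx.1]

theorem Complex.lintegral_comp_polarCoord_symm' (g : ℂ → ℝ≥0∞) :
    ∫⁻ p in polarCoord.target, ENNReal.ofReal p.1 * g (Complex.polarCoord.symm p) = ∫⁻ z, g z := by
  rw [← (Complex.volume_preserving_equiv_real_prod.symm).lintegral_comp_emb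
    Complex.measurableEquivRealProd.symm.measurableEmbedding, ← _root_.lintegral_comp_polarCoord_symm' (fun p => g (Complex.measurableEquivRealProd.symm p))]
  rfl


end Aux

lemma circle_mean_sq (f : ℂ → ℂ) {c : ℂ} {r : ℝ} (hr : 0 < r)
    (hc : ContinuousOn f (closedBall c r))
    (hd : ∀ z ∈ ball c r, DifferentiableAt ℂ f z) :
    2 * Real.pi * ‖f c‖ ^ 2 ≤ ∫ θ in Ioc (-Real.pi) Real.pi, ‖f (circleMap c r θ)‖ ^ 2 := by
  have hmv : (∮ z in C(c, r), (z - c)⁻¹ • f z) = (2 * Real.pi * I : ℂ) • f c :=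
    circleIntegral_sub_center_inv_smul_of_differentiable_on_off_countable hr Set.countable_empty
      hc (fun z hz => hd z hz.1)
  have hne : ∀ θ : ℝ, circleMap 0 r θ ≠ 0 := by
    intro θ h
    exact hr.ne' (circleMap_eq_center_iff.1 h)
  have h1 : (∮ z in C(c, r), (z - c)⁻¹ • f z)
      = I * ∫ θ in (0:ℝ)..(2 * Real.pi), f (circleMap c r θ) := by
    rw [circleIntegral, ← intervalIntegral.integral_const_mul]
    refine intervalIntegral.integral_congr fun θ _ => ?_
    simp only [deriv_circleMap, circleMap_sub_center, smul_eq_mul]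
    field_simp [hne θ]
  have h2 : ∫ θ in (0:ℝ)..(2 * Real.pi), f (circleMap c r θ) = (2 * Real.pi : ℝ) • f c := by
    have h := hmv.symm.trans h1
    have hI : (2 * Real.pi * I : ℂ) • f c = I * ((2 * Real.pi : ℝ) • f c) := by
      simp [smul_eq_mul]
      ring
    rw [hI] at h
    exact (mul_left_cancel₀ I_ne_zero h).symm
  have hcont : Continuous fun θ => f (circleMap c r θ) :=
    hc.comp_continuous (continuous_circleMap c r) (fun θ => circleMap_mem_closedBall c hr.le θ)
  set u : ℝ → ℝ := fun θ => ‖f (circleMap c r θ)‖ with hu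
  have hucont : Continuous u := hcont.norm
  have hunn : ∀ θ, 0 ≤ u θ := fun θ => norm_nonneg _
  -- norm inequality
  have h3 : 2 * Real.pi * ‖f c‖ ≤ ∫ θ in (0:ℝ)..(2 * Real.pi), u θ := by
    have h := intervalIntegral.norm_integral_le_integral_norm (μ := volume)
      (f := fun θ => f (circleMap c r θ)) (a := 0) (b := 2 * Real.pi) Real.two_pi_pos.le
    rw [h2] at h
    rwa [norm_smul, Real.norm_of_nonneg Real.two_pi_pos.le] at h
  -- Cauchy-Schwarz on Ioc 0 2π
  set μ := volume.restrict (Ioc (0:ℝ) (2 * Real.pi)) with hμdef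
  obtain ⟨C, hC⟩ := isCompact_Icc.exists_bound_of_continuousOn
    (hucont.continuousOn : ContinuousOn u (Icc 0 (2 * Real.pi)))
  have haebd : ∀ᵐ θ ∂μ, ‖u θ‖ ≤ C :=
    ae_restrict_of_forall_mem measurableSet_Ioc fun θ hθ => hC θ (Ioc_subset_Icc_self hθ)
  have hmemu : MemLp u (ENNReal.ofReal 2) μ :=
    MemLp.of_bound hucont.aestronglyMeasurable C haebd
  have hmem1 : MemLp (fun _ : ℝ => (1:ℝ)) (ENNReal.ofReal 2) μ := memLp_const 1
  have hCS := integral_mul_le_Lp_mul_Lq_of_nonneg (μ := μ)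
    (Real.holderConjugate_iff_eq_conjExponent (by norm_num) |>.2 (by norm_num) :
      Real.HolderConjugate 2 2)
    (Filter.Eventually.of_forall hunn) (Filter.Eventually.of_forall fun _ => zero_le_one)
    hmemu hmem1
  have hrp2 : ∀ x : ℝ, x ^ (2:ℝ) = x ^ (2:ℕ) := fun x => by
    rw [show (2:ℝ) = ((2:ℕ):ℝ) by norm_num, Real.rpow_natCast]
  simp only [mul_one, Real.one_rpow, hrp2, one_pow] at hCS
  have hμu : μ Set.univ = ENNReal.ofReal (2 * Real.pi) := by
    simp [hμdef, Real.volume_Ioc]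
  have hconst : ∫ _ : ℝ, (1:ℝ) ∂μ = 2 * Real.pi := by
    rw [integral_const, smul_eq_mul, mul_one, measureReal_def, hμu,
      ENNReal.toReal_ofReal Real.two_pi_pos.le]
  rw [hconst] at hCS
  have hInt02 : ∫ θ in (0:ℝ)..(2*Real.pi), u θ = ∫ θ, u θ ∂μ := by
    rw [intervalIntegral.integral_of_le Real.two_pi_pos.le]
  have key : 2 * Real.pi * ‖f c‖ ≤ (∫ θ, u θ ^ (2:ℕ) ∂μ) ^ ((1:ℝ)/2) * (2 * Real.pi) ^ ((1:ℝ)/2) := by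
    calc 2 * Real.pi * ‖f c‖ ≤ ∫ θ, u θ ∂μ := hInt02 ▸ h3
    _ ≤ _ := hCS
  rw [← Real.sqrt_eq_rpow, ← Real.sqrt_eq_rpow] at key
  set A := ∫ θ, u θ ^ 2 ∂μ with hA
  have hAnn : 0 ≤ A := integral_nonneg fun θ => sq_nonneg _
  have hsq : 2 * Real.pi * ‖f c‖ ^ 2 ≤ A := by
    have h2 := mul_self_le_mul_self (by positivity) key
    nlinarith [Real.sq_sqrt hAnn, Real.sq_sqrt Real.two_pi_pos.le, Real.sqrt_nonneg A,
      Real.sqrt_nonneg (2 * Real.pi), Real.two_pi_pos, norm_nonneg (f c)]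
  have hper : Function.Periodic (fun θ => u θ ^ 2) (2 * Real.pi) := fun θ => by
    simp only [u, periodic_circleMap c r θ]
  have hshift : ∫ θ in (0:ℝ)..(2 * Real.pi), u θ ^ 2
      = ∫ θ in (-Real.pi)..Real.pi, u θ ^ 2 := by
    have h := hper.intervalIntegral_add_eq (-Real.pi) 0
    rw [zero_add] at h
    rw [← h, show -Real.pi + 2 * Real.pi = Real.pi by ring]
  have hAeq : A = ∫ θ in Ioc (-Real.pi) Real.pi, u θ ^ 2 := by
    rw [hA, hμdef, ← intervalIntegral.integral_of_le Real.two_pi_pos.le, hshift,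
      intervalIntegral.integral_of_le (by linarith [Real.pi_pos] : -Real.pi ≤ Real.pi)]
  rw [hAeq] at hsq
  exact hsq

lemma submean (a : ℝ) (ha : 0 < a) (f : ℂ → ℂ)
    (hf : DifferentiableOn ℂ f (ball (0 : ℂ) a))
    (hf2 : IntegrableOn (fun z => ‖f z‖ ^ 2) (ball (0 : ℂ) a))
    (w₀ : ℂ) (hw : ‖w₀‖ < a) :
    Real.pi * (a - ‖w₀‖) ^ 2 * ‖f w₀‖ ^ 2 ≤ ∫ w in ball (0 : ℂ) a, ‖f w‖ ^ 2 := by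
  set R := a - ‖w₀‖ with hRdef
  have hR : 0 < R := by rw [hRdef]; linarith
  have hball : ball w₀ R ⊆ ball (0 : ℂ) a := by
    intro w hwmem
    rw [mem_ball, dist_eq_norm] at hwmem ⊢
    calc ‖w - 0‖ = ‖w₀ + (w - w₀)‖ := by ring_nf
    _ ≤ ‖w₀‖ + ‖w - w₀‖ := norm_add_le _ _
    _ < ‖w₀‖ + R := by linarith
    _ = a := by rw [hRdef]; ring
  set G : ℂ → ℝ≥0∞ := fun w => ENNReal.ofReal (‖f w‖ ^ 2) with hGdef
  -- step 1
  have L1 : ∫⁻ w in ball w₀ R, G w ≤ ∫⁻ w in ball (0:ℂ) a, G w :=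
    lintegral_mono' (Measure.restrict_mono hball le_rfl) le_rfl
  -- step 2: translation
  have L2 : ∫⁻ w in ball (0:ℂ) R, G (w₀ + w) = ∫⁻ w in ball w₀ R, G w := by
    have hmp : MeasurePreserving (fun w : ℂ => w₀ + w) volume volume :=
      measurePreserving_add_left volume w₀
    have hemb : MeasurableEmbedding (fun w : ℂ => w₀ + w) :=
      (MeasurableEquiv.addLeft w₀).measurableEmbedding
    have hpre : (fun w : ℂ => w₀ + w) ⁻¹' (ball w₀ R) = ball (0:ℂ) R := by
      ext w
      simp [mem_ball, dist_eq_norm]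
    rw [← hpre]
    exact hmp.setLIntegral_comp_preimage_emb hemb _ _
  -- step 3: polar coordinates
  have hsymm_mem : ∀ p : ℝ × ℝ, p ∈ Ioo (0:ℝ) R ×ˢ Ioo (-Real.pi) Real.pi →
      Complex.polarCoord.symm p ∈ ball (0:ℂ) R := by
    intro p hp
    rw [mem_ball, dist_eq_norm, sub_zero, Complex.norm_polarCoord_symm,
      abs_of_pos hp.1.1]
    exact hp.1.2
  have L3 : ∫⁻ w in ball (0:ℂ) R, G (w₀ + w)
      = ∫⁻ p in Ioo (0:ℝ) R ×ˢ Ioo (-Real.pi) Real.pi,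
          ENNReal.ofReal p.1 * G (w₀ + Complex.polarCoord.symm p) := by
    have key := Complex.lintegral_comp_polarCoord_symm'
      ((ball (0:ℂ) R).indicator (fun w => G (w₀ + w)))
    rw [lintegral_indicator measurableSet_ball] at key
    rw [← key]
    have hSsub : Ioo (0:ℝ) R ×ˢ Ioo (-Real.pi) Real.pi ⊆ polarCoord.target := by
      rw [polarCoord_target]
      exact prod_mono (Ioo_subset_Ioi_self) subset_rfl
    have hSmeas : MeasurableSet (Ioo (0:ℝ) R ×ˢ Ioo (-Real.pi) Real.pi) :=
      (measurableSet_Ioo).prod measurableSet_Ioo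
    have hpt : ∀ p ∈ polarCoord.target,
        ENNReal.ofReal p.1 * (ball (0:ℂ) R).indicator (fun w => G (w₀ + w))
          (Complex.polarCoord.symm p)
        = (Ioo (0:ℝ) R ×ˢ Ioo (-Real.pi) Real.pi).indicator
            (fun q => ENNReal.ofReal q.1 * G (w₀ + Complex.polarCoord.symm q)) p := by
      intro p hp
      by_cases hpR : p.1 < R
      · have hmem : Complex.polarCoord.symm p ∈ ball (0:ℂ) R := by
          rw [mem_ball, dist_eq_norm, sub_zero, Complex.norm_polarCoord_symm]
          rw [polarCoord_target] at hp
          rwa [abs_of_pos hp.1]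
        have hmemS : p ∈ Ioo (0:ℝ) R ×ˢ Ioo (-Real.pi) Real.pi := by
          rw [polarCoord_target] at hp
          exact ⟨⟨hp.1, hpR⟩, hp.2⟩
        rw [indicator_of_mem hmem, indicator_of_mem hmemS]
      · have hmem : Complex.polarCoord.symm p ∉ ball (0:ℂ) R := by
          rw [mem_ball, dist_eq_norm, sub_zero, Complex.norm_polarCoord_symm]
          rw [polarCoord_target] at hp
          rw [abs_of_pos hp.1]
          exact fun h => hpR h
        have hmemS : p ∉ Ioo (0:ℝ) R ×ˢ Ioo (-Real.pi) Real.pi := fun h => hpR h.1.2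
        rw [indicator_of_notMem hmem, indicator_of_notMem hmemS, mul_zero]
    rw [setLIntegral_congr_fun polarCoord.open_target.measurableSet
      hpt,
      lintegral_indicator hSmeas, Measure.restrict_restrict hSmeas,
      inter_eq_self_of_subset_left hSsub]
  set S1 := Ioo (0:ℝ) R with hS1
  set S2 := Ioo (-Real.pi) Real.pi with hS2
  set K := ENNReal.ofReal (2 * Real.pi * ‖f w₀‖ ^ 2) with hK
  have hmapcont : Continuous fun p : ℝ × ℝ => w₀ + Complex.polarCoord.symm p := by
    have : (fun p : ℝ × ℝ => (Complex.polarCoord.symm p : ℂ))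
        = fun p : ℝ × ℝ => (p.1 : ℂ) * (Real.cos p.2 + Real.sin p.2 * I) :=
      funext fun p => Complex.polarCoord_symm_apply p
    have hsc : Continuous fun p : ℝ × ℝ => (Complex.polarCoord.symm p : ℂ) := by
      rw [this]; fun_prop
    exact continuous_const.add hsc
  have hmapsTo : MapsTo (fun p : ℝ × ℝ => w₀ + Complex.polarCoord.symm p)
      (S1 ×ˢ S2) (ball (0:ℂ) a) := by
    intro p hp
    apply hball
    have := hsymm_mem p hp
    rw [mem_ball, dist_eq_norm] at this ⊢
    simpa using this
  -- Tonelli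
  have hrestr : (volume : Measure (ℝ × ℝ)).restrict (S1 ×ˢ S2)
      = (volume.restrict S1).prod (volume.restrict S2) := by
    rw [Measure.prod_restrict, ← Measure.volume_eq_prod]
  have hphi : AEMeasurable (fun p : ℝ × ℝ => G (w₀ + Complex.polarCoord.symm p))
      ((volume.restrict S1).prod (volume.restrict S2)) := by
    rw [← hrestr]
    have hcont : ContinuousOn (fun p : ℝ × ℝ => ‖f (w₀ + Complex.polarCoord.symm p)‖ ^ 2)
        (S1 ×ˢ S2) :=
      (((hf.continuousOn.comp hmapcont.continuousOn hmapsTo).norm).pow 2)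
    exact ENNReal.measurable_ofReal.comp_aemeasurable
      (hcont.aemeasurable (measurableSet_Ioo.prod measurableSet_Ioo))
  have hh : AEMeasurable (fun p : ℝ × ℝ => ENNReal.ofReal p.1 * G (w₀ + Complex.polarCoord.symm p))
      ((volume.restrict S1).prod (volume.restrict S2)) :=
    (measurable_fst.ennreal_ofReal.aemeasurable).mul hphi
  have L4 : ∫⁻ p in S1 ×ˢ S2, ENNReal.ofReal p.1 * G (w₀ + Complex.polarCoord.symm p)
      = ∫⁻ r in S1, ∫⁻ θ in S2, ENNReal.ofReal r * G (w₀ + Complex.polarCoord.symm (r, θ)) := by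
    rw [hrestr]
    exact lintegral_prod _ hh
  -- inner bound
  have hcm : ∀ r θ : ℝ, w₀ + Complex.polarCoord.symm (r, θ) = circleMap w₀ r θ := by
    intro r θ
    rw [Complex.polarCoord_symm_apply, circleMap, Complex.exp_mul_I]
    push_cast
    ring
  have L5 : ∀ r ∈ S1, K * ENNReal.ofReal r
      ≤ ∫⁻ θ in S2, ENNReal.ofReal r * G (w₀ + Complex.polarCoord.symm (r, θ)) := by
    intro r hr
    have hr0 : 0 < r := hr.1
    have hsub : closedBall w₀ r ⊆ ball (0:ℂ) a := by
      intro w hwmem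
      rw [mem_closedBall, dist_eq_norm] at hwmem
      rw [mem_ball, dist_eq_norm, sub_zero]
      calc ‖w‖ = ‖w₀ + (w - w₀)‖ := by ring_nf
      _ ≤ ‖w₀‖ + ‖w - w₀‖ := norm_add_le _ _
      _ ≤ ‖w₀‖ + r := by linarith
      _ < ‖w₀‖ + R := by linarith [hr.2]
      _ = a := by rw [hRdef]; ring
    have hcball : ContinuousOn f (closedBall w₀ r) := hf.continuousOn.mono hsub
    have hdiff : ∀ z ∈ ball w₀ r, DifferentiableAt ℂ f z := fun z hz =>
      hf.differentiableAt (isOpen_ball.mem_nhds (hsub (ball_subset_closedBall hz)))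
    have hcirc := circle_mean_sq f hr0 hcball hdiff
    set v : ℝ → ℝ := fun θ => ‖f (circleMap w₀ r θ)‖ ^ 2 with hv
    have hvcont : Continuous v :=
      ((hcball.comp_continuous (continuous_circleMap _ _)
        (circleMap_mem_closedBall _ hr0.le)).norm).pow 2
    have hvint : IntegrableOn v (Ioc (-Real.pi) Real.pi) :=
      (hvcont.integrableOn_Icc).mono_set Ioc_subset_Icc_self
    have hofReal : ENNReal.ofReal (∫ θ in Ioc (-Real.pi) Real.pi, v θ)
        = ∫⁻ θ in Ioc (-Real.pi) Real.pi, ENNReal.ofReal (v θ) :=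
      ofReal_integral_eq_lintegral_ofReal hvint
        (Filter.Eventually.of_forall fun θ => sq_nonneg _)
    have hIooIoc : ∫⁻ θ in S2, ENNReal.ofReal (v θ)
        = ∫⁻ θ in Ioc (-Real.pi) Real.pi, ENNReal.ofReal (v θ) :=
      setLIntegral_congr Ioo_ae_eq_Ioc
    have hinner : K ≤ ∫⁻ θ in S2, G (w₀ + Complex.polarCoord.symm (r, θ)) := by
      have : K ≤ ∫⁻ θ in S2, ENNReal.ofReal (v θ) := by
        rw [hIooIoc, ← hofReal]
        exact ENNReal.ofReal_le_ofReal hcirc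
      refine this.trans_eq (lintegral_congr fun θ => ?_)
      rw [hGdef, hcm r θ]
    calc K * ENNReal.ofReal r = ENNReal.ofReal r * K := mul_comm _ _
    _ ≤ ENNReal.ofReal r * ∫⁻ θ in S2, G (w₀ + Complex.polarCoord.symm (r, θ)) :=
      mul_le_mul_right hinner _
    _ = _ := (lintegral_const_mul' _ _ ENNReal.ofReal_ne_top).symm
  -- outer
  have hIole : ∫⁻ r in S1, K * ENNReal.ofReal r
      ≤ ∫⁻ r in S1, ∫⁻ θ in S2, ENNReal.ofReal r * G (w₀ + Complex.polarCoord.symm (r, θ)) :=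
    lintegral_mono_ae (ae_restrict_of_forall_mem measurableSet_Ioo L5)
  have hradial : ∫⁻ r in S1, ENNReal.ofReal r = ENNReal.ofReal (R ^ 2 / 2) := by
    have hint : IntegrableOn (fun r : ℝ => r) S1 :=
      (continuous_id.integrableOn_Icc).mono_set Ioo_subset_Icc_self
    rw [← ofReal_integral_eq_lintegral_ofReal hint
      (ae_restrict_of_forall_mem measurableSet_Ioo fun x hx => hx.1.le)]
    congr 1
    rw [hS1, setIntegral_congr_set Ioo_ae_eq_Ioc, ← intervalIntegral.integral_of_le hR.le,
      integral_id]
    ring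
  have hKR : K * ENNReal.ofReal (R ^ 2 / 2)
      = ENNReal.ofReal (Real.pi * R ^ 2 * ‖f w₀‖ ^ 2) := by
    rw [hK, ← ENNReal.ofReal_mul (by positivity)]
    congr 1
    ring
  have Ltot : ENNReal.ofReal (Real.pi * R ^ 2 * ‖f w₀‖ ^ 2) ≤ ∫⁻ w in ball (0:ℂ) a, G w := by
    calc ENNReal.ofReal (Real.pi * R ^ 2 * ‖f w₀‖ ^ 2)
        = K * ∫⁻ r in S1, ENNReal.ofReal r := by rw [hradial, hKR]
    _ = ∫⁻ r in S1, K * ENNReal.ofReal r := (lintegral_const_mul' _ _ ENNReal.ofReal_ne_top).symm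
    _ ≤ ∫⁻ r in S1, ∫⁻ θ in S2, ENNReal.ofReal r * G (w₀ + Complex.polarCoord.symm (r, θ)) :=
      hIole
    _ = ∫⁻ p in S1 ×ˢ S2, ENNReal.ofReal p.1 * G (w₀ + Complex.polarCoord.symm p) := L4.symm
    _ = ∫⁻ w in ball (0:ℂ) R, G (w₀ + w) := L3.symm
    _ = ∫⁻ w in ball w₀ R, G w := L2
    _ ≤ _ := L1
  have hfin : ∫⁻ w in ball (0:ℂ) a, G w = ENNReal.ofReal (∫ w in ball (0:ℂ) a, ‖f w‖ ^ 2) :=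
    (ofReal_integral_eq_lintegral_ofReal hf2
      (Filter.Eventually.of_forall fun w => sq_nonneg _)).symm
  rw [hfin] at Ltot
  rwa [ENNReal.ofReal_le_ofReal_iff (integral_nonneg fun w => sq_nonneg _)] at Ltot


/-- Radial primitive estimate: for `f` holomorphic on `ball 0 a` with `‖f‖²` integrable,
the segment integral from `0` to `z` satisfies
`‖∫₀¹ f(tz)·z dt‖ ≤ π^{-1/2} ‖f‖_{L²(B_a)} log(a/(a - ‖z‖))`. -/

theorem segment_integral_le_log (a : ℝ) (ha : 0 < a) (f : ℂ → ℂ)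
    (hf : DifferentiableOn ℂ f (ball (0 : ℂ) a))
    (hf2 : IntegrableOn (fun z => ‖f z‖ ^ 2) (ball (0 : ℂ) a)) :
    ∀ z : ℂ, ‖z‖ < a →
      ‖∫ t in (0:ℝ)..1, f ((t : ℂ) * z) * z‖ ≤
        Real.pi ^ (-(1 : ℝ) / 2) * Real.sqrt (∫ w in ball (0 : ℂ) a, ‖f w‖ ^ 2) *
          Real.log (a / (a - ‖z‖)) := by
  intro z hz
  set M := ∫ w in ball (0 : ℂ) a, ‖f w‖ ^ 2 with hM
  have hMnn : 0 ≤ M := integral_nonneg fun w => sq_nonneg _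
  set C := Real.pi ^ (-(1 : ℝ) / 2) * Real.sqrt M with hC
  have hCnn : 0 ≤ C := by positivity
  have hCpi : C = Real.sqrt M / Real.sqrt Real.pi := by
    rw [hC, neg_div, Real.rpow_neg Real.pi_pos.le, ← Real.sqrt_eq_rpow]
    ring
  -- pointwise bound
  have hbd : ∀ w : ℂ, ‖w‖ < a → ‖f w‖ ≤ C / (a - ‖w‖) := by
    intro w hw
    have hRw : 0 < a - ‖w‖ := by linarith
    have h := submean a ha f hf hf2 w hw
    have h2 : ‖f w‖ ^ 2 ≤ M / (Real.pi * (a - ‖w‖) ^ 2) := by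
      rw [le_div_iff₀ (by positivity)]
      linarith [h]
    calc ‖f w‖ = Real.sqrt (‖f w‖ ^ 2) := (Real.sqrt_sq (norm_nonneg _)).symm
    _ ≤ Real.sqrt (M / (Real.pi * (a - ‖w‖) ^ 2)) := Real.sqrt_le_sqrt h2
    _ = C / (a - ‖w‖) := by
      rw [hCpi, Real.sqrt_div hMnn, Real.sqrt_mul Real.pi_pos.le, Real.sqrt_sq hRw.le, div_div]
  set b := ‖z‖ with hb
  have hb0 : 0 ≤ b := norm_nonneg _
  have hab : 0 < a - b := by linarith
  -- the integrand is continuous on [0,1]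
  have hmap : ∀ t : ℝ, t ∈ Icc (0:ℝ) 1 → ((t:ℂ) * z) ∈ ball (0:ℂ) a := by
    intro t ht
    rw [mem_ball, dist_eq_norm, sub_zero, norm_mul, Complex.norm_real,
      Real.norm_of_nonneg ht.1]
    calc t * b ≤ 1 * b := by
          apply mul_le_mul_of_nonneg_right ht.2 hb0
    _ = b := one_mul b
    _ < a := hz
  have hcontI : ContinuousOn (fun t : ℝ => f ((t:ℂ) * z) * z) (Icc 0 1) := by
    have : ContinuousOn (fun t : ℝ => f ((t:ℂ) * z)) (Icc 0 1) :=
      hf.continuousOn.comp (by fun_prop) hmap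
    exact this.mul continuousOn_const
  have hInt1 : IntervalIntegrable (fun t : ℝ => f ((t:ℂ) * z) * z) volume 0 1 :=
    ContinuousOn.intervalIntegrable (by rw [uIcc_of_le zero_le_one]; exact hcontI)
  -- the bound function
  set g : ℝ → ℝ := fun t => C * (b * (a - t * b)⁻¹) with hg
  have hden : ∀ t : ℝ, t ∈ Icc (0:ℝ) 1 → 0 < a - t * b := by
    intro t ht
    have : t * b ≤ b := by
      calc t * b ≤ 1 * b := mul_le_mul_of_nonneg_right ht.2 hb0
      _ = b := one_mul b
    linarith
  have hgcont : ContinuousOn g (Icc 0 1) := by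
    refine continuousOn_const.mul (continuousOn_const.mul (ContinuousOn.inv₀ (by fun_prop)
      fun t ht => (hden t ht).ne'))
  have hInt2 : IntervalIntegrable g volume 0 1 :=
    ContinuousOn.intervalIntegrable (by rw [uIcc_of_le zero_le_one]; exact hgcont)
  -- pointwise comparison
  have hcmp : ∀ t ∈ Icc (0:ℝ) 1, ‖f ((t:ℂ) * z) * z‖ ≤ g t := by
    intro t ht
    have hnorm : ‖(t:ℂ) * z‖ = t * b := by
      rw [norm_mul, Complex.norm_real, Real.norm_of_nonneg ht.1]
    have hlt : ‖(t:ℂ) * z‖ < a := by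
      have h := hmap t ht
      rwa [mem_ball, dist_eq_norm, sub_zero] at h
    have h1 := hbd _ hlt
    rw [hnorm] at h1
    rw [norm_mul]
    calc ‖f ((t:ℂ) * z)‖ * ‖z‖ ≤ (C / (a - t * b)) * b :=
      mul_le_mul_of_nonneg_right h1 hb0
    _ = g t := by rw [hg]; field_simp
  -- compute integral of g
  have hgint : ∫ t in (0:ℝ)..1, g t = C * Real.log (a / (a - b)) := by
    rw [hg, intervalIntegral.integral_const_mul]
    congr 1
    have hderiv : ∀ t ∈ uIcc (0:ℝ) 1,
        HasDerivAt (fun t : ℝ => -Real.log (a - t * b)) (b * (a - t * b)⁻¹) t := by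
      intro t ht
      rw [uIcc_of_le zero_le_one] at ht
      have h1 : HasDerivAt (fun t : ℝ => a - t * b) (-b) t := by
        simpa using ((hasDerivAt_id t).mul_const b).const_sub a
      have h2 := (Real.hasDerivAt_log (hden t ht).ne').comp t h1
      have h3 := h2.neg
      exact h3.congr_deriv (by ring)
    have hcont2 : ContinuousOn (fun t : ℝ => b * (a - t * b)⁻¹) (uIcc 0 1) := by
      rw [uIcc_of_le zero_le_one]
      exact continuousOn_const.mul (ContinuousOn.inv₀ (by fun_prop)
        fun t ht => (hden t ht).ne')
    rw [intervalIntegral.integral_eq_sub_of_hasDerivAt hderiv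
      hcont2.intervalIntegrable]
    have h0 : a - 0 * b = a := by ring
    have h1 : a - 1 * b = a - b := by ring
    rw [h0, h1, Real.log_div ha.ne' hab.ne']
    ring
  -- conclude
  calc ‖∫ t in (0:ℝ)..1, f ((t:ℂ) * z) * z‖
      ≤ ∫ t in (0:ℝ)..1, ‖f ((t:ℂ) * z) * z‖ :=
        intervalIntegral.norm_integral_le_integral_norm zero_le_one
  _ ≤ ∫ t in (0:ℝ)..1, g t := by
      apply intervalIntegral.integral_mono_on zero_le_one hInt1.norm hInt2 hcmp
  _ = C * Real.log (a / (a - b)) := hgint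
  _ = _ := by rw [hC]
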